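/- arXiv:1709.09951 — 2 statements merged into one kernel-verified Lean document; each statement's English description precedes it below -/
import Mathlib

section
/- Let z1, z2 : [a,b] → ℝ^d be solutions of z'(t) = f1(z(t)) and z'(t) = f2(z(t)) respectively with the same initial condition z1(a) = z2(a) = η, where f2 = f1 + H and f2 is Lipschitz with constant L. Then for any a ≤ x ≤ t ≤ b, sup_{ξ ∈ [x,t]} ‖z2(ξ) − z1(ξ)‖ ≥ (1/(2 + L(t−x))) · ‖∫_x^t H(z1(ξ)) dξ‖. -/
/-- Gronwall-type lower bound for the distance of two solutions of autonomous
ODEs `z₁' = f₁(z₁)`, `z₂' = f₂(z₂)` with the same initial value, where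
`f₂ = f₁ + H` and `f₂` is Lipschitz with constant `L`:
for all `a ≤ x ≤ t ≤ b`,
`sup_{ξ∈[x,t]} ‖z₂ ξ − z₁ ξ‖ ≥ (1/(2 + L(t−x))) ‖∫_x^t H(z₁ ξ) dξ‖`. -/
theorem stmt0
    (d : ℕ) (hd : 1 ≤ d) (a b : ℝ) (hab : a < b)
    (f1 f2 H : (Fin d → ℝ) → (Fin d → ℝ))
    (hH : f2 = f1 + H)
    (L : ℝ) (hL : 0 ≤ L) (hf2 : LipschitzWith (Real.toNNReal L) f2)
    (η : Fin d → ℝ) (z1 z2 : ℝ → (Fin d → ℝ))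
    (hz1a : z1 a = η) (hz2a : z2 a = η)
    (hz1 : ∀ t ∈ Set.Icc a b, HasDerivAt z1 (f1 (z1 t)) t)
    (hz2 : ∀ t ∈ Set.Icc a b, HasDerivAt z2 (f2 (z2 t)) t)
    (x t : ℝ) (hax : a ≤ x) (hxt : x ≤ t) (htb : t ≤ b) :
    (1 / (2 + L * (t - x))) * ‖∫ ξ in x..t, H (z1 ξ)‖ ≤
      ⨆ ξ : Set.Icc x t, ‖z2 ξ - z1 ξ‖ := by
  set M := ⨆ ξ : Set.Icc x t, ‖z2 ξ - z1 ξ‖ with hMdef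
  have hM0 : 0 ≤ M := Real.iSup_nonneg fun ξ => norm_nonneg _
  have hc : (0:ℝ) < 2 + L * (t - x) := by nlinarith [mul_nonneg hL (sub_nonneg.2 hxt)]
  by_cases hint : IntervalIntegrable (fun ξ => H (z1 ξ)) MeasureTheory.volume x t
  swap
  · rw [intervalIntegral.integral_undef hint]
    simpa using hM0
  have hsub : Set.Icc x t ⊆ Set.Icc a b := Set.Icc_subset_Icc hax htb
  have huIcc : Set.uIcc x t = Set.Icc x t := Set.uIcc_of_le hxt
  have hcz1 : ContinuousOn z1 (Set.Icc a b) :=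
    fun u hu => (hz1 u hu).continuousAt.continuousWithinAt
  have hcz2 : ContinuousOn z2 (Set.Icc a b) :=
    fun u hu => (hz2 u hu).continuousAt.continuousWithinAt
  have he : ∀ u, f1 u = f2 u - H u := by intro u; rw [hH]; simp
  have hf2z1int : IntervalIntegrable (fun ξ => f2 (z1 ξ)) MeasureTheory.volume x t := by
    apply ContinuousOn.intervalIntegrable
    rw [huIcc]
    exact hf2.continuous.comp_continuousOn (hcz1.mono hsub)
  have hf2z2int : IntervalIntegrable (fun ξ => f2 (z2 ξ)) MeasureTheory.volume x t := by
    apply ContinuousOn.intervalIntegrable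
    rw [huIcc]
    exact hf2.continuous.comp_continuousOn (hcz2.mono hsub)
  have hf1z1int : IntervalIntegrable (fun ξ => f1 (z1 ξ)) MeasureTheory.volume x t := by
    have : (fun ξ => f1 (z1 ξ)) = fun ξ => f2 (z1 ξ) - H (z1 ξ) := by
      funext ξ; exact he _
    rw [this]
    exact hf2z1int.sub hint
  have hFTC1 : (∫ ξ in x..t, f1 (z1 ξ)) = z1 t - z1 x :=
    intervalIntegral.integral_eq_sub_of_hasDerivAt
      (fun u hu => hz1 u (hsub (huIcc ▸ hu))) hf1z1int
  have hFTC2 : (∫ ξ in x..t, f2 (z2 ξ)) = z2 t - z2 x :=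
    intervalIntegral.integral_eq_sub_of_hasDerivAt
      (fun u hu => hz2 u (hsub (huIcc ▸ hu))) hf2z2int
  have key : (∫ ξ in x..t, H (z1 ξ)) =
      (∫ ξ in x..t, (f2 (z1 ξ) - f2 (z2 ξ))) + (z2 t - z1 t) - (z2 x - z1 x) := by
    have h1 : (∫ ξ in x..t, H (z1 ξ)) =
        (∫ ξ in x..t, f2 (z1 ξ)) - ∫ ξ in x..t, f1 (z1 ξ) := by
      rw [← intervalIntegral.integral_sub hf2z1int hf1z1int]
      apply intervalIntegral.integral_congr
      intro u _
      show H (z1 u) = f2 (z1 u) - f1 (z1 u)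
      rw [he]; abel
    rw [h1, intervalIntegral.integral_sub hf2z1int hf2z2int, hFTC1, hFTC2]
    abel
  have hbdd : BddAbove (Set.range fun ξ : Set.Icc x t => ‖z2 ξ - z1 ξ‖) := by
    have himg := (isCompact_Icc.image_of_continuousOn
      (((hcz2.mono hsub).sub (hcz1.mono hsub)).norm : ContinuousOn
        (fun ξ => ‖z2 ξ - z1 ξ‖) (Set.Icc x t))).bddAbove
    rw [Set.image_eq_range] at himg
    exact himg
  have hbound : ∀ ξ ∈ Set.Icc x t, ‖z2 ξ - z1 ξ‖ ≤ M := by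
    intro ξ hξ
    exact le_ciSup hbdd ⟨ξ, hξ⟩
  have hLip : ∀ ξ ∈ Set.uIoc x t, ‖f2 (z1 ξ) - f2 (z2 ξ)‖ ≤ L * M := by
    intro ξ hξ
    have hmem : ξ ∈ Set.Icc x t := Set.Ioc_subset_Icc_self (Set.uIoc_of_le hxt ▸ hξ)
    have hd := hf2.dist_le_mul (z1 ξ) (z2 ξ)
    rw [Real.coe_toNNReal L hL] at hd
    calc ‖f2 (z1 ξ) - f2 (z2 ξ)‖ = dist (f2 (z1 ξ)) (f2 (z2 ξ)) := (dist_eq_norm _ _).symm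
      _ ≤ L * dist (z1 ξ) (z2 ξ) := hd
      _ ≤ L * M := by
          rw [dist_eq_norm, norm_sub_rev]
          exact mul_le_mul_of_nonneg_left (hbound ξ hmem) hL
  have hint_bound : ‖∫ ξ in x..t, (f2 (z1 ξ) - f2 (z2 ξ))‖ ≤ L * M * (t - x) := by
    have := intervalIntegral.norm_integral_le_of_norm_le_const hLip
    rwa [abs_of_nonneg (sub_nonneg.2 hxt)] at this
  rw [one_div, inv_mul_le_iff₀ hc]
  calc ‖∫ ξ in x..t, H (z1 ξ)‖
      = ‖(∫ ξ in x..t, (f2 (z1 ξ) - f2 (z2 ξ))) + (z2 t - z1 t) - (z2 x - z1 x)‖ := by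
        rw [key]
    _ ≤ ‖(∫ ξ in x..t, (f2 (z1 ξ) - f2 (z2 ξ))) + (z2 t - z1 t)‖ + ‖z2 x - z1 x‖ :=
        norm_sub_le _ _
    _ ≤ ‖∫ ξ in x..t, (f2 (z1 ξ) - f2 (z2 ξ))‖ + ‖z2 t - z1 t‖ + ‖z2 x - z1 x‖ :=
        add_le_add (norm_add_le _ _) (le_refl _)
    _ ≤ L * M * (t - x) + M + M :=
        add_le_add (add_le_add hint_bound (hbound t ⟨hxt, le_refl t⟩))
          (hbound x ⟨le_refl x, hxt⟩)
    _ = (2 + L * (t - x)) * M := by ring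
end

section
/- Let z1, z2 : [a,b] → ℝ^d be solutions of z' = f1(z) and z' = f2(z) with z1(a) = z2(a) = η, where f2 = f1 + H and f2 is Lipschitz with constant L. Then sup_{ξ ∈ [a,b]} ‖z2(ξ) − z1(ξ)‖ ≥ (1/(1 + L(b−a))) · ‖∫_a^b H(z1(ξ)) dξ‖. -/
/-- Gronwall-type lower bound for the distance of two solutions of autonomous
ODEs `z₁' = f₁(z₁)`, `z₂' = f₂(z₂)` with the same initial value, where
`f₂ = f₁ + H` and `f₂` is Lipschitz with constant `L`:
for all `a ≤ x ≤ t ≤ b`,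
`sup_{ξ∈[x,t]} ‖z₂ ξ − z₁ ξ‖ ≥ (1/(2 + L(t−x))) ‖∫_x^t H(z₁ ξ) dξ‖`. -/
theorem stmt1
    (d : ℕ) (hd : 1 ≤ d) (a b : ℝ) (hab : a < b)
    (f1 f2 H : (Fin d → ℝ) → (Fin d → ℝ))
    (hH : f2 = f1 + H)
    (L : ℝ) (hL : 0 ≤ L) (hf2 : LipschitzWith (Real.toNNReal L) f2)
    (η : Fin d → ℝ) (z1 z2 : ℝ → (Fin d → ℝ))
    (hz1a : z1 a = η) (hz2a : z2 a = η)
    (hz1 : ∀ t ∈ Set.Icc a b, HasDerivAt z1 (f1 (z1 t)) t)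
    (hz2 : ∀ t ∈ Set.Icc a b, HasDerivAt z2 (f2 (z2 t)) t) :
    (1 / (1 + L * (b - a))) * ‖∫ ξ in a..b, H (z1 ξ)‖ ≤
      ⨆ ξ : Set.Icc a b, ‖z2 ξ - z1 ξ‖ := by
  have hab' : a ≤ b := hab.le
  set M : ℝ := ⨆ ξ : Set.Icc a b, ‖z2 ξ - z1 ξ‖ with hM
  have hMnonneg : 0 ≤ M := Real.iSup_nonneg fun ξ => norm_nonneg _
  have hden : (0:ℝ) < 1 + L * (b - a) := by nlinarith
  -- trivial case: the integrand is not interval integrable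
  by_cases hint : IntervalIntegrable (fun ξ => H (z1 ξ)) MeasureTheory.volume a b
  swap
  · rw [intervalIntegral.integral_undef hint]
    simpa using hMnonneg
  -- continuity of solutions on [a,b]
  have hc1 : ContinuousOn z1 (Set.Icc a b) := fun t ht =>
    (hz1 t ht).continuousAt.continuousWithinAt
  have hc2 : ContinuousOn z2 (Set.Icc a b) := fun t ht =>
    (hz2 t ht).continuousAt.continuousWithinAt
  have hcg : ContinuousOn (fun t => z2 t - z1 t) (Set.Icc a b) := hc2.sub hc1
  -- M is an upper bound
  have hbdd : BddAbove (Set.range fun ξ : Set.Icc a b => ‖z2 ξ - z1 ξ‖) := by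
    have h1 := (isCompact_Icc (a := a) (b := b)).bddAbove_image (hcg.norm)
    have h2 : (Set.range fun ξ : Set.Icc a b => ‖z2 ↑ξ - z1 ↑ξ‖)
        = (fun x => ‖z2 x - z1 x‖) '' Set.Icc a b := by
      ext y
      constructor
      · rintro ⟨⟨x, hx⟩, rfl⟩; exact ⟨x, hx, rfl⟩
      · rintro ⟨x, hx, rfl⟩; exact ⟨⟨x, hx⟩, rfl⟩
    rwa [h2]
  have hMle : ∀ t ∈ Set.Icc a b, ‖z2 t - z1 t‖ ≤ M := fun t ht =>
    le_ciSup hbdd ⟨t, ht⟩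
  -- derivative of z2 - z1
  have hf1 : ∀ x, f1 x = f2 x - H x := by
    intro x; rw [hH]; simp
  have hderiv : ∀ t ∈ Set.uIcc a b,
      HasDerivAt (fun t => z2 t - z1 t)
        ((f2 (z2 t) - f2 (z1 t)) + H (z1 t)) t := by
    intro t ht
    rw [Set.uIcc_of_le hab'] at ht
    have h := (hz2 t ht).sub (hz1 t ht)
    rw [hf1] at h
    refine h.congr_deriv ?_
    abel
  -- integrability
  have hcontd : ContinuousOn (fun t => f2 (z2 t) - f2 (z1 t)) (Set.Icc a b) :=
    (hf2.continuous.comp_continuousOn hc2).sub (hf2.continuous.comp_continuousOn hc1)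
  have hint2 : IntervalIntegrable (fun t => f2 (z2 t) - f2 (z1 t))
      MeasureTheory.volume a b := by
    apply ContinuousOn.intervalIntegrable
    rwa [Set.uIcc_of_le hab']
  have hint3 : IntervalIntegrable
      (fun t => (f2 (z2 t) - f2 (z1 t)) + H (z1 t)) MeasureTheory.volume a b :=
    hint2.add hint
  -- FTC
  have hftc : (∫ t in a..b, ((f2 (z2 t) - f2 (z1 t)) + H (z1 t)))
      = z2 b - z1 b := by
    rw [intervalIntegral.integral_eq_sub_of_hasDerivAt hderiv hint3]
    simp [hz1a, hz2a]
  rw [intervalIntegral.integral_add hint2 hint] at hftc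
  have hsplit : (∫ ξ in a..b, H (z1 ξ))
      = (z2 b - z1 b) - ∫ t in a..b, (f2 (z2 t) - f2 (z1 t)) := by
    rw [← hftc]; abel
  -- bound the Lipschitz integral
  have hIbound : ‖∫ t in a..b, (f2 (z2 t) - f2 (z1 t))‖ ≤ L * M * (b - a) := by
    have := intervalIntegral.norm_integral_le_of_norm_le_const
      (C := L * M) (f := fun t => f2 (z2 t) - f2 (z1 t)) (a := a) (b := b) ?_
    · rwa [abs_of_nonneg (by linarith)] at this
    · intro t ht
      rw [Set.uIoc_of_le hab'] at ht
      have ht' : t ∈ Set.Icc a b := ⟨ht.1.le, ht.2⟩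
      have hlip : ‖f2 (z2 t) - f2 (z1 t)‖ ≤ L * ‖z2 t - z1 t‖ := by
        have := hf2.dist_le_mul (z2 t) (z1 t)
        rwa [dist_eq_norm, dist_eq_norm, Real.coe_toNNReal L hL] at this
      calc ‖f2 (z2 t) - f2 (z1 t)‖ ≤ L * ‖z2 t - z1 t‖ := hlip
        _ ≤ L * M := by nlinarith [hMle t ht', norm_nonneg (z2 t - z1 t)]
  have hMb : ‖z2 b - z1 b‖ ≤ M := hMle b ⟨hab', le_rfl⟩
  have hmain : ‖∫ ξ in a..b, H (z1 ξ)‖ ≤ (1 + L * (b - a)) * M := by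
    rw [hsplit]
    calc ‖(z2 b - z1 b) - ∫ t in a..b, (f2 (z2 t) - f2 (z1 t))‖
        ≤ ‖z2 b - z1 b‖ + ‖∫ t in a..b, (f2 (z2 t) - f2 (z1 t))‖ := norm_sub_le _ _
      _ ≤ M + L * M * (b - a) := add_le_add hMb hIbound
      _ = (1 + L * (b - a)) * M := by ring
  rw [div_mul_eq_mul_div, one_mul, div_le_iff₀ hden]
  linarith [hmain]
end
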